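/- Let σ be a nonnegative integer with σ < k, and let p_k be the monic shifted Legendre polynomial of degree k on [0,1]. Then the modified moment ν_k = ∫_0^1 p_k(t) t^σ ln(1/t) dt satisfies (2k)!/(k!)² · ν_k = (−1)^{k−σ} (σ!)² (k−σ−1)! / (k+σ+1)!. -/

import Mathlib

open Polynomial MeasureTheory Finset

lemma aux_integrable_pow_mul_log (n : ℕ) :
    IntegrableOn (fun t : ℝ => t ^ n * Real.log t) (Set.Ioc 0 1) := by
  have hmeas : AEStronglyMeasurable (fun t : ℝ => t ^ n * Real.log t)
      (volume.restrict (Set.Ioc (0:ℝ) 1)) :=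
    ((continuous_pow n).measurable.mul Real.measurable_log).aestronglyMeasurable
  have hg : IntegrableOn (fun t : ℝ => 2 * t ^ (-(1/2) : ℝ)) (Set.Ioc 0 1) := by
    have := (intervalIntegral.intervalIntegrable_rpow' (a := 0) (b := 1)
      (r := -(1/2)) (by norm_num)).const_mul 2
    rw [intervalIntegrable_iff_integrableOn_Ioc_of_le (by norm_num)] at this
    exact this
  refine Integrable.mono hg hmeas ?_
  filter_upwards [ae_restrict_mem measurableSet_Ioc] with t ht
  obtain ⟨ht0, ht1⟩ := ht
  have hlt : |Real.log t| ≤ 2 * t ^ (-(1/2) : ℝ) := by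
    rw [abs_of_nonpos (Real.log_nonpos (le_of_lt ht0) ht1)]
    have h1 : Real.log t = 2 * Real.log (t ^ ((1/2) : ℝ)) := by
      rw [Real.log_rpow ht0]; ring
    rw [h1]
    have h2 : -Real.log (t ^ ((1/2):ℝ)) ≤ (t ^ ((1/2):ℝ))⁻¹ := by
      rw [← Real.log_inv]
      have : (0:ℝ) < t ^ ((1/2):ℝ) := Real.rpow_pos_of_pos ht0 _
      calc Real.log (t ^ ((1/2):ℝ))⁻¹ ≤ (t ^ ((1/2):ℝ))⁻¹ - 1 := by
            have := Real.add_one_le_exp (Real.log (t ^ ((1/2):ℝ))⁻¹)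
            have h3 : Real.exp (Real.log (t ^ ((1/2):ℝ))⁻¹) = (t ^ ((1/2):ℝ))⁻¹ :=
              Real.exp_log (by positivity)
            linarith [h3 ▸ this]
        _ ≤ (t ^ ((1/2):ℝ))⁻¹ := by linarith
    rw [← Real.rpow_neg (le_of_lt ht0)] at h2
    nlinarith [h2]
  have hnorm : ‖t ^ n * Real.log t‖ ≤ 2 * t ^ (-(1/2) : ℝ) := by
    rw [norm_mul, norm_pow]
    have htn : ‖t‖ ^ n ≤ 1 := by
      rw [Real.norm_eq_abs, abs_of_pos ht0]
      exact pow_le_one₀ (le_of_lt ht0) ht1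
    calc ‖t‖ ^ n * ‖Real.log t‖ ≤ 1 * ‖Real.log t‖ := by
          exact mul_le_mul_of_nonneg_right htn (norm_nonneg _)
      _ = |Real.log t| := by rw [one_mul, Real.norm_eq_abs]
      _ ≤ 2 * t ^ (-(1/2) : ℝ) := hlt
  exact hnorm.trans (Real.le_norm_self _)


lemma aux_integral_pow_mul_log (n : ℕ) :
    ∫ t in Set.Ioc (0:ℝ) 1, t ^ n * Real.log t = -(1 / ((n:ℝ)+1)^2) := by
  have hne : ((n:ℝ)+1) ≠ 0 := by positivity
  set F : ℝ → ℝ := fun t => (t^(n+1) * Real.log t) / ((n:ℝ)+1) - t^(n+1)/((n:ℝ)+1)^2 with hF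
  have hcont : ContinuousOn F (Set.Icc 0 1) := by
    have h1 : Continuous (fun t : ℝ => (t^n * (t * Real.log t)) / ((n:ℝ)+1)
        - t^(n+1)/((n:ℝ)+1)^2) := by
      refine Continuous.sub ?_ (by continuity)
      exact ((continuous_pow n).mul Real.continuous_mul_log).div_const _
    have h2 : ∀ t : ℝ, F t = (t^n * (t * Real.log t)) / ((n:ℝ)+1)
        - t^(n+1)/((n:ℝ)+1)^2 := by
      intro t; simp only [hF]; ring_nf
    exact (h1.congr fun t => (h2 t).symm).continuousOn
  have hderiv : ∀ t ∈ Set.Ioo (0:ℝ) 1, HasDerivAt F (t ^ n * Real.log t) t := by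
    intro t ht
    have ht0 : t ≠ 0 := ne_of_gt ht.1
    have h1 : HasDerivAt (fun t : ℝ => t^(n+1) * Real.log t)
        ((↑(n+1) * t ^ n) * Real.log t + t^(n+1) * t⁻¹) t :=
      (hasDerivAt_pow (n+1) t).mul (Real.hasDerivAt_log ht0)
    have h2 : HasDerivAt (fun t : ℝ => t^(n+1)) (↑(n+1) * t ^ n) t := hasDerivAt_pow (n+1) t
    have := (h1.div_const ((n:ℝ)+1)).sub (h2.div_const (((n:ℝ)+1)^2))
    refine this.congr_deriv ?_
    have : t^(n+1) * t⁻¹ = t^n := by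
      rw [pow_succ, mul_assoc, mul_inv_cancel₀ ht0, mul_one]
    rw [this]
    push_cast
    field_simp
    ring
  have hint : IntervalIntegrable (fun t : ℝ => t ^ n * Real.log t) volume 0 1 := by
    rw [intervalIntegrable_iff_integrableOn_Ioc_of_le (by norm_num)]
    exact aux_integrable_pow_mul_log n
  have := intervalIntegral.integral_eq_sub_of_hasDeriv_right_of_le (by norm_num : (0:ℝ) ≤ 1)
    hcont (fun x hx => (hderiv x hx).hasDerivWithinAt) hint
  rw [intervalIntegral.integral_of_le (by norm_num : (0:ℝ) ≤ 1)] at this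
  rw [this]
  simp only [hF, one_pow, Real.log_one, Real.log_zero, mul_zero, zero_mul, mul_one,
    zero_pow (Nat.succ_ne_zero n), zero_div, zero_sub, sub_zero]


lemma aux_fact_prod (c : ℕ) : ∀ n : ℕ,
    (c.factorial : ℝ) * ∏ i ∈ range n, ((c:ℝ) + i + 1) = ((c + n).factorial : ℝ) := by
  intro n
  induction n with
  | zero => simp
  | succ m ih =>
      rw [prod_range_succ, ← mul_assoc, ih]
      have : c + (m+1) = (c + m) + 1 := by ring
      rw [this, Nat.factorial_succ]
      push_cast
      ring

lemma aux_prod_add_one (n : ℕ) :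
    ∏ l ∈ range n, ((l:ℝ) + 1) = (n.factorial : ℝ) := by
  induction n with
  | zero => simp
  | succ m ih => rw [prod_range_succ, ih, Nat.factorial_succ]; push_cast; ring

lemma aux_prod_range_sub (i : ℕ) :
    ∏ l ∈ range i, ((l:ℝ) - i) = (-1)^i * (i.factorial : ℝ) := by
  have h1 : ∏ l ∈ range i, ((l:ℝ) - i) = ∏ l ∈ range i, ((-1) * ((i:ℝ) - l)) := by
    apply prod_congr rfl; intro l _; ring
  rw [h1, prod_mul_distrib, prod_const, card_range]
  congr 1
  rw [← Finset.prod_range_reflect (fun l => ((i:ℝ) - l)) i]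
  have h2 : ∀ l ∈ range i, (i:ℝ) - (↑(i - 1 - l)) = (l:ℝ) + 1 := by
    intro l hl
    rw [mem_range] at hl
    have h0 : i - 1 - l + (l + 1) = i := by omega
    have h3 : ((i - 1 - l : ℕ) : ℝ) = (i:ℝ) - l - 1 := by
      have : ((i - 1 - l : ℕ) : ℝ) + ((l:ℝ) + 1) = i := by
        rw [← Nat.cast_succ, ← Nat.cast_add, h0]
      linarith
    rw [h3]; ring
  rw [prod_congr rfl h2, aux_prod_add_one]

lemma aux_prod_Ico_sub {i n : ℕ} (h : i < n) :
    ∏ l ∈ Ico (i+1) n, ((l:ℝ) - i) = ((n - 1 - i).factorial : ℝ) := by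
  rw [Finset.prod_Ico_eq_prod_range]
  have h2 : ∀ l ∈ range (n - (i+1)), ((i + 1 + l : ℕ):ℝ) - (i:ℝ) = (l:ℝ) + 1 := by
    intro l _; push_cast; ring
  rw [prod_congr rfl h2, aux_prod_add_one]
  congr 2
  omega

lemma aux_prod_erase_sub {i n : ℕ} (h : i < n) :
    ∏ l ∈ (range n).erase i, ((l:ℝ) - i) = (-1)^i * (i.factorial : ℝ) * ((n - 1 - i).factorial : ℝ) := by
  have hset : (range n).erase i = range i ∪ Ico (i+1) n := by
    ext x
    simp only [mem_erase, mem_range, mem_union, mem_Ico]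
    omega
  have hdisj : Disjoint (range i) (Ico (i+1) n) := by
    rw [Finset.disjoint_left]
    intro x hx hx2
    rw [mem_range] at hx
    rw [mem_Ico] at hx2
    omega
  rw [hset, prod_union hdisj, aux_prod_range_sub, aux_prod_Ico_sub h]


noncomputable def auxA (k j : ℕ) : ℝ :=
  (-1)^(k-j) * (k.choose j) * (k.factorial) * ((k+j).choose j)

noncomputable def auxP1 (k : ℕ) : Polynomial ℝ :=
  ∑ j ∈ range (k+1), C (auxA k j) * ∏ i ∈ (range (k+1)).erase j, (X + C ((i:ℝ)+1))

noncomputable def auxP2 (k : ℕ) : Polynomial ℝ :=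
  C (k.factorial : ℝ) * ∏ m ∈ range k, (X - C (m:ℝ))

lemma auxP1_eval (k : ℕ) (x : ℝ) :
    (auxP1 k).eval x = ∑ j ∈ range (k+1), auxA k j * ∏ i ∈ (range (k+1)).erase j, (x + i + 1) := by
  rw [auxP1, eval_finset_sum]
  apply sum_congr rfl
  intro j _
  rw [eval_mul, eval_C, eval_prod]
  congr 1
  apply prod_congr rfl
  intro i _
  rw [eval_add, eval_X, eval_C]
  ring

lemma auxP2_eval (k : ℕ) (x : ℝ) :
    (auxP2 k).eval x = (k.factorial : ℝ) * ∏ m ∈ range k, (x - m) := by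
  rw [auxP2, eval_mul, eval_C, eval_prod]
  congr 1
  apply prod_congr rfl
  intro m _
  rw [eval_sub, eval_X, eval_C]

lemma auxKI (k : ℕ) : auxP1 k = auxP2 k := by
  have hdeg : (auxP1 k - auxP2 k).natDegree < k + 1 := by
    have h1 : (auxP1 k).natDegree ≤ k := by
      apply Polynomial.natDegree_sum_le_of_forall_le
      intro j hj
      refine le_trans (natDegree_C_mul_le _ _) ?_
      refine le_trans (natDegree_prod_le _ _) ?_
      have : ∀ i ∈ (range (k+1)).erase j, (X + C ((i:ℝ)+1)).natDegree = 1 := by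
        intro i _; exact natDegree_X_add_C _
      rw [sum_congr rfl this, sum_const, smul_eq_mul, mul_one]
      rw [mem_range] at hj
      rw [card_erase_of_mem (mem_range.2 hj), card_range]
      omega
    have h2 : (auxP2 k).natDegree ≤ k := by
      refine le_trans (natDegree_C_mul_le _ _) ?_
      refine le_trans (natDegree_prod_le _ _) ?_
      have : ∀ m ∈ range k, (X - C ((m:ℝ))).natDegree = 1 := by
        intro m _; exact natDegree_X_sub_C _
      rw [sum_congr rfl this, sum_const, smul_eq_mul, mul_one, card_range]
    calc (auxP1 k - auxP2 k).natDegree ≤ max (auxP1 k).natDegree (auxP2 k).natDegree :=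
          natDegree_sub_le _ _
      _ ≤ k := max_le h1 h2
      _ < k + 1 := Nat.lt_succ_self k
  have heval : ∀ i : Fin (k+1), (auxP1 k - auxP2 k).eval (-((i:ℝ)+1)) = 0 := by
    intro ⟨i, hik⟩
    simp only
    rw [eval_sub, sub_eq_zero]
    have hifact : ((i.factorial : ℝ)) ≠ 0 := Nat.cast_ne_zero.2 (Nat.factorial_ne_zero i)
    apply mul_left_cancel₀ hifact
    -- LHS value
    have hP1 : (auxP1 k).eval (-((i:ℝ)+1)) =
        auxA k i * ((-1)^i * (i.factorial : ℝ) * (((k - i)).factorial : ℝ)) := by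
      rw [auxP1_eval]
      rw [Finset.sum_eq_single i]
      · congr 1
        have : ∀ l ∈ (range (k+1)).erase i, (-((i:ℝ)+1) + l + 1) = ((l:ℝ) - i) := by
          intro l _; ring
        rw [prod_congr rfl this, aux_prod_erase_sub hik,
          show k + 1 - 1 - i = k - i from by omega]
      · intro j hj hji
        apply mul_eq_zero_of_right
        apply prod_eq_zero (Finset.mem_erase.2 ⟨fun h => hji h.symm, mem_range.2 hik⟩)
        ring
      · intro h
        exact absurd (mem_range.2 hik) h
    have hP2 : (i.factorial : ℝ) * (auxP2 k).eval (-((i:ℝ)+1)) =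
        (k.factorial : ℝ) * ((-1)^k * ((i + k).factorial : ℝ)) := by
      rw [auxP2_eval]
      have : ∀ m ∈ range k, (-((i:ℝ)+1) - m) = (-1) * ((i:ℝ) + m + 1) := by
        intro m _; ring
      rw [prod_congr rfl this, prod_mul_distrib, prod_const, card_range]
      rw [show (i.factorial : ℝ) * ((k.factorial:ℝ) * ((-1)^k * ∏ m ∈ range k, ((i:ℝ) + m + 1)))
        = (k.factorial : ℝ) * ((-1)^k * ((i.factorial : ℝ) * ∏ m ∈ range k, ((i:ℝ) + m + 1)))
        from by ring]
      rw [aux_fact_prod i k]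
    rw [hP2]
    rw [hP1]
    -- numeric identity
    have hik' : i ≤ k := Nat.le_of_lt_succ hik
    have e1 : ((k.choose i : ℕ) : ℝ) * (i.factorial : ℝ) * (((k-i).factorial : ℝ)) = (k.factorial : ℝ) := by
      rw [← Nat.cast_mul, ← Nat.cast_mul, Nat.choose_mul_factorial_mul_factorial hik']
    have e2 : (((k+i).choose i : ℕ) : ℝ) * (i.factorial : ℝ) * ((k.factorial : ℝ)) = ((k+i).factorial : ℝ) := by
      have := Nat.choose_mul_factorial_mul_factorial (Nat.le_add_left i k)
      rw [Nat.add_sub_cancel] at this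
      rw [← Nat.cast_mul, ← Nat.cast_mul, this]
    have e3 : ((-1:ℝ))^(k-i) * ((-1:ℝ))^i = (-1)^k := by
      rw [← pow_add]
      congr 1
      omega
    have e4 : ((i+k).factorial : ℝ) = ((k+i).factorial : ℝ) := by rw [Nat.add_comm]
    rw [auxA, e4]
    linear_combination ((k.choose i : ℝ) * (i.factorial:ℝ) * ((k-i).factorial:ℝ)) *
        (((k+i).choose i : ℝ) * (i.factorial:ℝ) * (k.factorial:ℝ)) * e3 +
      ((-1:ℝ)^k * (((k+i).choose i : ℝ) * (i.factorial:ℝ) * (k.factorial:ℝ))) * e1 +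
      ((-1:ℝ)^k * (k.factorial:ℝ)) * e2
  have := Polynomial.eq_zero_of_natDegree_lt_card_of_eval_eq_zero (auxP1 k - auxP2 k)
    (f := fun i : Fin (k+1) => -((i:ℝ)+1)) ?_ heval ?_
  · exact sub_eq_zero.1 this
  · intro a b hab
    simp only [neg_inj] at hab
    have : ((a:ℕ):ℝ) = ((b:ℕ):ℝ) := by linarith
    exact Fin.ext (Nat.cast_injective this)
  · rw [Fintype.card_fin]
    exact hdeg


lemma aux_derivative_finset_prod (t : Finset ℕ) (f : ℕ → Polynomial ℝ) :
    derivative (∏ i ∈ t, f i) = ∑ i ∈ t, (∏ j ∈ t.erase i, f j) * derivative (f i) := by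
  classical
  induction t using Finset.induction_on with
  | empty => simp
  | insert a u ha ih =>
      rw [Finset.prod_insert ha, derivative_mul, ih, Finset.sum_insert ha,
        Finset.erase_insert ha]
      rw [Finset.mul_sum]
      have h2 : ∀ i ∈ u, f a * ((∏ j ∈ u.erase i, f j) * derivative (f i))
          = (∏ j ∈ (insert a u).erase i, f j) * derivative (f i) := by
        intro i hi
        have hai : a ≠ i := by rintro rfl; exact ha hi
        rw [Finset.erase_insert_of_ne hai,
          Finset.prod_insert (fun h => ha (Finset.mem_of_mem_erase h)), mul_assoc]
      rw [Finset.sum_congr rfl h2]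
      ring


lemma aux_pos_fac (x : ℕ) (j : ℕ) : ((x:ℝ) + j + 1) ≠ 0 := by positivity

lemma auxD_pos (k : ℕ) (x : ℕ) : 0 < ∏ i ∈ range (k+1), ((x:ℝ) + i + 1) := by
  apply Finset.prod_pos
  intro i _
  positivity

lemma aux_prod_erase_eq (k : ℕ) (x : ℝ) (hx : ∀ i ∈ range (k+1), x + i + 1 ≠ 0)
    {j : ℕ} (hj : j ∈ range (k+1)) :
    ∏ i ∈ (range (k+1)).erase j, (x + i + 1)
      = (∏ i ∈ range (k+1), (x + i + 1)) / (x + j + 1) := by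
  rw [eq_div_iff (hx j hj),
    mul_comm (∏ i ∈ (range (k+1)).erase j, (x + i + 1)) (x + j + 1)]
  exact Finset.mul_prod_erase (range (k+1)) (fun i => x + i + 1) hj

lemma auxT (k n : ℕ) (hn : n < k) :
    ∑ j ∈ range (k+1), auxA k j / ((n:ℝ) + j + 1) = 0 := by
  have h := congrArg (eval ((n:ℝ))) (auxKI k)
  rw [auxP1_eval, auxP2_eval] at h
  have hz : ∏ m ∈ range k, ((n:ℝ) - m) = 0 :=
    Finset.prod_eq_zero (mem_range.2 hn) (by simp)
  rw [hz, mul_zero] at h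
  set D := ∏ i ∈ range (k+1), ((n:ℝ) + i + 1) with hD
  have hDpos := auxD_pos k n
  have hcong : ∀ j ∈ range (k+1),
      auxA k j * ∏ i ∈ (range (k+1)).erase j, ((n:ℝ) + i + 1)
        = (auxA k j / ((n:ℝ) + j + 1)) * D := by
    intro j hj
    rw [aux_prod_erase_eq k _ (fun i _ => aux_pos_fac n i) hj]
    field_simp
    rw [hD]
  rw [Finset.sum_congr rfl hcong, ← Finset.sum_mul] at h
  rcases mul_eq_zero.1 h with h' | h'
  · exact h'
  · exact absurd h' (ne_of_gt hDpos)

lemma auxS (k σ : ℕ) (hσ : σ < k) :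
    ((σ+k+1).factorial : ℝ) * ∑ j ∈ range (k+1), auxA k j / ((σ:ℝ) + j + 1)^2
      = (-1)^(k-σ) * (k.factorial : ℝ) * ((σ.factorial : ℝ))^2 * ((k-σ-1).factorial : ℝ) := by
  have h := congrArg (eval ((σ:ℝ))) (congrArg derivative (auxKI k))
  set s := range (k+1) with hs
  set D := ∏ i ∈ range (k+1), ((σ:ℝ) + i + 1) with hD
  have hDpos := auxD_pos k σ
  set H := ∑ i ∈ range (k+1), ((σ:ℝ) + i + 1)⁻¹ with hH
  set S := ∑ j ∈ range (k+1), auxA k j / ((σ:ℝ) + j + 1)^2 with hS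
  -- LHS derivative evaluation
  have hL : (derivative (auxP1 k)).eval (σ:ℝ) = -(D * S) := by
    rw [auxP1]
    rw [derivative_sum]
    rw [eval_finset_sum]
    have hterm : ∀ j ∈ s, (derivative (C (auxA k j) * ∏ i ∈ s.erase j, (X + C ((i:ℝ)+1)))).eval (σ:ℝ)
        = auxA k j * (D / ((σ:ℝ)+j+1) * (H - ((σ:ℝ)+j+1)⁻¹)) := by
      intro j hj
      rw [derivative_C_mul, eval_C_mul, aux_derivative_finset_prod]
      rw [eval_finset_sum]
      congr 1
      have hterm2 : ∀ i ∈ s.erase j,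
          ((∏ l ∈ (s.erase j).erase i, (X + C ((l:ℝ)+1))) * derivative (X + C ((i:ℝ)+1))).eval (σ:ℝ)
            = (D / ((σ:ℝ)+j+1)) * ((σ:ℝ)+i+1)⁻¹ := by
        intro i hi
        rw [derivative_add, derivative_X, derivative_C, add_zero, mul_one, eval_prod]
        have e1 : ∀ l ∈ (s.erase j).erase i, (X + C ((l:ℝ)+1)).eval (σ:ℝ) = (σ:ℝ) + l + 1 := by
          intro l _; rw [eval_add, eval_X, eval_C]; ring
        rw [Finset.prod_congr rfl e1]
        have e2 : ((σ:ℝ)+i+1) * ∏ l ∈ (s.erase j).erase i, ((σ:ℝ) + l + 1)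
            = ∏ l ∈ s.erase j, ((σ:ℝ) + l + 1) :=
          Finset.mul_prod_erase (s.erase j) (fun l => (σ:ℝ) + l + 1) hi
        have e3 : ((σ:ℝ)+j+1) * ∏ l ∈ s.erase j, ((σ:ℝ) + l + 1) = D :=
          Finset.mul_prod_erase s (fun l => (σ:ℝ) + l + 1) hj
        have hi' := aux_pos_fac σ i
        have hj' := aux_pos_fac σ j
        field_simp
        nlinarith [e2, e3]
      rw [Finset.sum_congr rfl hterm2]
      rw [← Finset.mul_sum]
      congr 1
      rw [Finset.sum_erase_eq_sub hj]
    rw [Finset.sum_congr rfl hterm]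
    -- now a sum manipulation
    have expand : ∀ j ∈ s, auxA k j * (D / ((σ:ℝ)+j+1) * (H - ((σ:ℝ)+j+1)⁻¹))
        = D * H * (auxA k j / ((σ:ℝ)+j+1)) - D * (auxA k j / ((σ:ℝ)+j+1)^2) := by
      intro j hj
      have hj' := aux_pos_fac σ j
      field_simp
    rw [Finset.sum_congr rfl expand, Finset.sum_sub_distrib, ← Finset.mul_sum, ← Finset.mul_sum]
    rw [← hS]
    have hT := auxT k σ hσ
    rw [hT, mul_zero, zero_sub]
  -- RHS derivative evaluation
  have hR : (derivative (auxP2 k)).eval (σ:ℝ)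
      = (k.factorial : ℝ) * ((-1)^(k-1) * ((-1)^σ * (σ.factorial : ℝ) * ((k-1-σ).factorial : ℝ))) := by
    rw [auxP2, derivative_C_mul, eval_C_mul, aux_derivative_finset_prod, eval_finset_sum]
    congr 1
    rw [Finset.sum_eq_single σ]
    · rw [derivative_sub, derivative_X, derivative_C, sub_zero, mul_one, eval_prod]
      have e1 : ∀ l ∈ (range k).erase σ, (X - C ((l:ℝ))).eval (σ:ℝ) = -((l:ℝ) - σ) := by
        intro l _; rw [eval_sub, eval_X, eval_C]; ring
      rw [Finset.prod_congr rfl e1]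
      have e2 : ∀ l ∈ (range k).erase σ, -((l:ℝ) - σ) = (-1) * ((l:ℝ) - σ) := by
        intro l _; ring
      rw [Finset.prod_congr rfl e2, Finset.prod_mul_distrib, Finset.prod_const,
        Finset.card_erase_of_mem (mem_range.2 hσ), Finset.card_range,
        aux_prod_erase_sub hσ]
    · intro m hm hmσ
      rw [eval_mul]
      apply mul_eq_zero_of_left
      rw [eval_prod]
      apply Finset.prod_eq_zero (i := σ)
      · exact Finset.mem_erase.2 ⟨Ne.symm hmσ, mem_range.2 hσ⟩
      · simp
    · intro hσ'
      exact absurd (mem_range.2 hσ) hσ'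
  rw [hL, hR] at h
  -- conclude
  have hfac := aux_fact_prod σ (k+1)
  have hσk : σ + (k+1) = σ + k + 1 := by omega
  rw [hσk] at hfac
  have hsign : ((-1:ℝ))^(k-1) * (-1)^σ = -((-1:ℝ))^(k-σ) := by
    have hk1 : k - 1 = (k - σ - 1) + σ := by omega
    have hk4 : k - σ = (k - σ - 1) + 1 := by omega
    rw [hk1, hk4]
    calc ((-1:ℝ))^((k-σ-1)+σ) * (-1)^σ = (-1)^(k-σ-1) * ((-1)^σ * (-1)^σ) := by
          rw [pow_add]; ring
      _ = (-1)^(k-σ-1) := by rw [← pow_add, ← two_mul, pow_mul]; norm_num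
      _ = -((-1:ℝ))^((k-σ-1)+1) := by rw [pow_succ]; ring
  have hkσ : k - 1 - σ = k - σ - 1 := by omega
  rw [hkσ] at h
  calc ((σ+k+1).factorial : ℝ) * S = (σ.factorial : ℝ) * D * S := by rw [← hfac]
    _ = (σ.factorial : ℝ) * -(-(D * S)) := by ring
    _ = (σ.factorial : ℝ) * -((k.factorial : ℝ) * ((-1)^(k-1) * ((-1)^σ * (σ.factorial : ℝ) * ((k-σ-1).factorial : ℝ)))) := by rw [← h]
    _ = (-1)^(k-σ) * (k.factorial : ℝ) * ((σ.factorial : ℝ))^2 * ((k-σ-1).factorial : ℝ) := by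
        linear_combination (-((σ.factorial:ℝ)^2 * (k.factorial:ℝ) * ((k-σ-1).factorial:ℝ))) * hsign


noncomputable def auxQ (k : ℕ) : Polynomial ℝ :=
  ∑ j ∈ range (k+1), C (auxA k j) * X^j

lemma auxQ_eval (k : ℕ) (t : ℝ) :
    (auxQ k).eval t = ∑ j ∈ range (k+1), auxA k j * t^j := by
  rw [auxQ, eval_finset_sum]
  exact sum_congr rfl fun j _ => by rw [eval_mul, eval_C, eval_pow, eval_X]

lemma aux_moment_pow (m : ℕ) : ∫ t in Set.Ioc (0:ℝ) 1, t ^ m = 1/((m:ℝ)+1) := by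
  rw [← intervalIntegral.integral_of_le (by norm_num : (0:ℝ) ≤ 1), integral_pow]
  norm_num

lemma auxQ_mom (k n : ℕ) :
    ∫ t in Set.Ioc (0:ℝ) 1, (auxQ k).eval t * t^n
      = ∑ j ∈ range (k+1), auxA k j / ((n:ℝ) + j + 1) := by
  have hpt : ∀ t : ℝ, (auxQ k).eval t * t^n = ∑ j ∈ range (k+1), auxA k j * t^(j+n) := by
    intro t
    rw [auxQ_eval, Finset.sum_mul]
    exact sum_congr rfl fun j _ => by rw [pow_add]; ring
  simp_rw [hpt]
  rw [integral_finset_sum]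
  · apply sum_congr rfl
    intro j _
    rw [integral_const_mul, aux_moment_pow]
    push_cast
    ring
  · intro j _
    apply Continuous.integrableOn_Ioc
    continuity

lemma auxQ_logmom (k σ : ℕ) :
    ∫ t in Set.Ioc (0:ℝ) 1, (auxQ k).eval t * (t^σ * Real.log t)
      = -∑ j ∈ range (k+1), auxA k j / ((σ:ℝ) + j + 1)^2 := by
  have hpt : ∀ t : ℝ, (auxQ k).eval t * (t^σ * Real.log t)
      = ∑ j ∈ range (k+1), auxA k j * (t^(j+σ) * Real.log t) := by
    intro t
    rw [auxQ_eval, Finset.sum_mul]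
    exact sum_congr rfl fun j _ => by rw [pow_add]; ring
  simp_rw [hpt]
  rw [integral_finset_sum]
  · rw [← Finset.sum_neg_distrib]
    apply sum_congr rfl
    intro j _
    rw [integral_const_mul, aux_integral_pow_mul_log]
    push_cast
    ring
  · intro j _
    exact (aux_integrable_pow_mul_log (j+σ)).const_mul _

lemma auxQ_orth (k : ℕ) (r : Polynomial ℝ) (hr : r.degree < (k : WithBot ℕ)) :
    ∫ t in Set.Ioc (0:ℝ) 1, (auxQ k).eval t * r.eval t = 0 := by
  rcases eq_or_ne r 0 with rfl | hr0
  · simp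
  have hnd : r.natDegree < k := by
    rwa [Polynomial.natDegree_lt_iff_degree_lt hr0]
  have hpt : ∀ t : ℝ, (auxQ k).eval t * r.eval t
      = ∑ m ∈ range k, r.coeff m * ((auxQ k).eval t * t^m) := by
    intro t
    rw [Polynomial.eval_eq_sum_range' hnd, Finset.mul_sum]
    exact sum_congr rfl fun m _ => by ring
  simp_rw [hpt]
  rw [integral_finset_sum]
  · apply Finset.sum_eq_zero
    intro m hm
    rw [integral_const_mul, auxQ_mom, auxT k m (mem_range.1 hm), mul_zero]
  · intro m _
    apply Continuous.integrableOn_Ioc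
    have : Continuous fun t : ℝ => (auxQ k).eval t := (auxQ k).continuous
    continuity


theorem modified_moments_log_weight_integer (k σ : ℕ) (hσ : σ < k)
    (p : Polynomial ℝ) (hm : p.Monic) (hd : p.natDegree = k)
    (horth : ∀ q : Polynomial ℝ, q.degree < (k : WithBot ℕ) →
      ∫ t in Set.Ioc (0 : ℝ) 1, p.eval t * q.eval t = 0) :
    (Nat.factorial (2 * k) : ℝ) / ((Nat.factorial k : ℝ)) ^ 2 *
      ∫ t in Set.Ioc (0 : ℝ) 1, p.eval t * t ^ σ * Real.log (1 / t) =
    (-1 : ℝ) ^ (k - σ) * (Nat.factorial σ : ℝ) ^ 2 *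
      (Nat.factorial (k - σ - 1) : ℝ) / (Nat.factorial (k + σ + 1) : ℝ) := by
  classical
  set c : ℝ := auxA k k with hc
  have hcval : c = (k.factorial : ℝ) * ((k+k).choose k) := by
    rw [hc, auxA, Nat.sub_self, pow_zero, Nat.choose_self]
    push_cast
    ring
  have hcpos : 0 < c := by
    rw [hcval]
    have h1 : 0 < (k.factorial : ℝ) := by positivity
    have h2 : 0 < ((k+k).choose k : ℝ) := by
      have := Nat.choose_pos (show k ≤ k + k from Nat.le_add_right k k)
      positivity
    positivity
  have hcne : c ≠ 0 := ne_of_gt hcpos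
  -- coefficient and degree facts for Q
  have hQcoeffk : (auxQ k).coeff k = c := by
    rw [auxQ, finset_sum_coeff]
    rw [Finset.sum_eq_single k]
    · rw [coeff_C_mul, coeff_X_pow, if_pos rfl, mul_one]
    · intro j _ hj
      rw [coeff_C_mul, coeff_X_pow, if_neg (Ne.symm hj), mul_zero]
    · intro h
      exact absurd (mem_range.2 (Nat.lt_succ_self k)) h
  have hQnd_le : (auxQ k).natDegree ≤ k := by
    apply Polynomial.natDegree_sum_le_of_forall_le
    intro j hj
    refine le_trans (natDegree_C_mul_le _ _) ?_
    rw [natDegree_X_pow]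
    exact Nat.lt_succ_iff.1 (mem_range.1 hj)
  have hQne : auxQ k ≠ 0 := fun h => hcne (by rw [← hQcoeffk, h, coeff_zero])
  have hQnd : (auxQ k).natDegree = k :=
    le_antisymm hQnd_le (le_natDegree_of_ne_zero (hQcoeffk ▸ hcne))
  have hQlc : (auxQ k).leadingCoeff = c := by rw [leadingCoeff, hQnd, hQcoeffk]
  have hpne : p ≠ 0 := hm.ne_zero
  have hQdeg : (auxQ k).degree = (k : WithBot ℕ) := by
    rw [degree_eq_natDegree hQne, hQnd]
  -- the difference R
  set R : Polynomial ℝ := auxQ k - C c * p with hR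
  have hRdeg : R.degree < (k : WithBot ℕ) := by
    have hCp_deg : (C c * p).degree = (k : WithBot ℕ) := by
      rw [degree_C_mul hcne, degree_eq_natDegree hpne, hd]
    have hCp_lc : (C c * p).leadingCoeff = c := by
      rw [leadingCoeff_mul, leadingCoeff_C, hm.leadingCoeff, mul_one]
    have := Polynomial.degree_sub_lt (hQdeg.trans hCp_deg.symm) hQne (hQlc.trans hCp_lc.symm)
    rwa [← hR, hQdeg] at this
  -- integrability of polynomial products on Ioc 0 1
  have hint : ∀ f g : Polynomial ℝ,
      IntegrableOn (fun t : ℝ => f.eval t * g.eval t) (Set.Ioc 0 1) := by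
    intro f g
    apply Continuous.integrableOn_Ioc
    exact f.continuous.mul g.continuous
  -- ∫ R² = 0
  have hRsq : ∫ t in Set.Ioc (0:ℝ) 1, (R.eval t)^2 = 0 := by
    have hpt : ∀ t : ℝ, (R.eval t)^2
        = (auxQ k).eval t * R.eval t - c * (p.eval t * R.eval t) := by
      intro t
      rw [hR]
      simp only [eval_sub, eval_mul, eval_C]
      ring
    simp_rw [hpt]
    rw [integral_sub (hint _ _) (((hint p R).const_mul c))]
    rw [integral_const_mul, auxQ_orth k R hRdeg, horth R hRdeg, mul_zero, sub_zero]
  -- R = 0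
  have hR0 : R = 0 := by
    by_contra hR0
    have hnn : 0 ≤ fun t : ℝ => (R.eval t)^2 := fun t => sq_nonneg _
    have hintR : Integrable (fun t : ℝ => (R.eval t)^2) (volume.restrict (Set.Ioc 0 1)) := by
      have := hint R R
      simpa [pow_two, IntegrableOn] using this
    have hae := (integral_eq_zero_iff_of_nonneg hnn hintR).1 hRsq
    have hroots : Set.Finite {x : ℝ | R.IsRoot x} := Polynomial.finite_setOf_isRoot hR0
    have hae2 : ∀ᵐ t ∂(volume : Measure ℝ), t ∈ Set.Ioc (0:ℝ) 1 → R.eval t ^ 2 = 0 := by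
      have := (ae_restrict_iff' measurableSet_Ioc).1 hae
      filter_upwards [this] with t ht htm
      simpa using ht htm
    have hN : volume {t : ℝ | ¬ (t ∈ Set.Ioc (0:ℝ) 1 → R.eval t ^ 2 = 0)} = 0 :=
      hae2
    have hsub : Set.Ioc (0:ℝ) 1 \ {x : ℝ | R.IsRoot x} ⊆
        {t : ℝ | ¬ (t ∈ Set.Ioc (0:ℝ) 1 → R.eval t ^ 2 = 0)} := by
      intro t ht
      simp only [Set.mem_setOf_eq, Classical.not_imp]
      refine ⟨ht.1, pow_ne_zero 2 ?_⟩
      exact ht.2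
    have h1 : volume (Set.Ioc (0:ℝ) 1 \ {x : ℝ | R.IsRoot x}) = 0 :=
      measure_mono_null hsub hN
    have h2 : volume (Set.Ioc (0:ℝ) 1 \ {x : ℝ | R.IsRoot x}) = volume (Set.Ioc (0:ℝ) 1) :=
      measure_diff_null (hroots.measure_zero volume)
    rw [h1, Real.volume_Ioc] at h2
    norm_num at h2
  have hQP : auxQ k = C c * p := by
    have := sub_eq_zero.1 (hR ▸ hR0)
    exact sub_eq_zero.1 (by rwa [← hR])
  -- compute the integral
  set S : ℝ := ∑ j ∈ range (k+1), auxA k j / ((σ:ℝ) + j + 1)^2 with hS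
  have hlog : ∀ t : ℝ, Real.log (1/t) = -Real.log t := by
    intro t; rw [one_div, Real.log_inv]
  have hmain : c * ∫ t in Set.Ioc (0:ℝ) 1, p.eval t * t ^ σ * Real.log (1 / t) = S := by
    rw [← integral_const_mul]
    have hpt : ∀ t : ℝ, c * (p.eval t * t ^ σ * Real.log (1 / t))
        = -((auxQ k).eval t * (t^σ * Real.log t)) := by
      intro t
      rw [hlog t, hQP]
      simp only [eval_mul, eval_C]
      ring
    simp_rw [hpt]
    rw [integral_neg, auxQ_logmom k σ, hS, neg_neg]
  -- final arithmetic
  have hfacS := auxS k σ hσ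
  have h2k : ((2*k).factorial : ℝ) = c * (k.factorial : ℝ) := by
    have := Nat.choose_mul_factorial_mul_factorial (Nat.le_add_right k k)
    rw [Nat.add_sub_cancel] at this
    rw [show 2*k = k+k from by omega, hcval]
    rw [← this]
    push_cast
    ring
  have hI : (∫ t in Set.Ioc (0:ℝ) 1, p.eval t * t ^ σ * Real.log (1 / t)) = S / c :=
    eq_div_of_mul_eq hcne (by rw [mul_comm]; exact hmain)
  rw [hI, h2k]
  rw [show k + σ + 1 = σ + k + 1 from by omega]
  have hfkne : (k.factorial : ℝ) ≠ 0 := by positivity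
  have hfskne : ((σ+k+1).factorial : ℝ) ≠ 0 := by positivity
  calc c * (k.factorial : ℝ) / (k.factorial : ℝ)^2 * (S/c) = S / (k.factorial : ℝ) := by
        field_simp
    _ = (-1 : ℝ) ^ (k - σ) * (Nat.factorial σ : ℝ) ^ 2 *
        (Nat.factorial (k - σ - 1) : ℝ) / (Nat.factorial (σ + k + 1) : ℝ) := by
        rw [div_eq_div_iff hfkne hfskne]
        linear_combination hfacS
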